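/- In the discrete torus (ℤ/4ℤ)^n, there is no non-extensible cube packing consisting of exactly 2^n - 1 cubes; equivalently, every cube packing with 2^n - 1 cubes can be extended to a tiling by adding one more cube. -/

import Mathlib

/-- The cube `v + {0,1}^n` in the discrete torus `(ℤ/4ℤ)^n`. -/
def cube {n : ℕ} (v : Fin n → ZMod 4) : Set (Fin n → ZMod 4) :=
  {x | ∀ i, x i = v i ∨ x i = v i + 1}

namespace CubeAuxProof
open Finset

def par (a : ZMod 4) : ZMod 2 := (a.val : ZMod 2)

instance {n : ℕ} (v x : Fin n → ZMod 4) : Decidable (x ∈ cube v) :=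
  decidable_of_iff (∀ i, x i = v i ∨ x i = v i + 1) Iff.rfl

lemma par_eq_par {a b c : ZMod 4} (ha : a = c ∨ a = c + 1) (hb : b = c ∨ b = c + 1)
    (h : par a = par b) : a = b := by revert a b c; decide

lemma par_add_one (a : ZMod 4) : par (a + 1) = par a + 1 := by revert a; decide

lemma zmod2_ne {a b : ZMod 2} (h : a ≠ b) : a + 1 = b := by revert a b; decide

variable {n : ℕ}

def fib (s : Fin n → ZMod 2) : Finset (Fin n → ZMod 4) :=
  univ.filter fun x => ∀ i, par (x i) = s i

lemma mem_fib {s : Fin n → ZMod 2} {x : Fin n → ZMod 4} :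
    x ∈ fib s ↔ ∀ i, par (x i) = s i := by simp [fib]

lemma fib_card (s : Fin n → ZMod 2) : (fib s).card = 2 ^ n := by
  have : fib s = Fintype.piFinset (fun i => univ.filter fun a : ZMod 4 => par a = s i) := by
    ext x
    simp [fib, Fintype.mem_piFinset]
  rw [this, Fintype.card_piFinset]
  have h2 : ∀ b : ZMod 2, (univ.filter fun a : ZMod 4 => par a = b).card = 2 := by decide
  simp [h2]

lemma cube_fib_unique (v : Fin n → ZMod 4) (s : Fin n → ZMod 2) :
    ∃! x, x ∈ cube v ∧ x ∈ fib s := by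
  refine ⟨fun i => if par (v i) = s i then v i else v i + 1, ⟨?_, ?_⟩, ?_⟩
  · intro i
    by_cases h : par (v i) = s i <;> simp [h]
  · rw [mem_fib]
    intro i
    by_cases h : par (v i) = s i <;> simp [h]
    rw [par_add_one, zmod2_ne h]
  · rintro y ⟨hyc, hyf⟩
    funext i
    rw [mem_fib] at hyf
    refine par_eq_par (hyc i) ?_ ?_
    · by_cases h : par (v i) = s i <;> simp [h]
    · rw [hyf i]
      by_cases h : par (v i) = s i
      · simp [h]
      · rw [if_neg h, par_add_one, zmod2_ne h]

def uncov (P : Finset (Fin n → ZMod 4)) (s : Fin n → ZMod 2) : Finset (Fin n → ZMod 4) :=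
  (fib s).filter fun x => ∀ v ∈ P, x ∉ cube v

variable {P : Finset (Fin n → ZMod 4)}

lemma covered_card (hP : (P : Set (Fin n → ZMod 4)).Pairwise fun v w => Disjoint (cube v) (cube w))
    (s : Fin n → ZMod 2) :
    ((fib s).filter fun x => ∃ v ∈ P, x ∈ cube v).card = P.card := by
  have heq : ((fib s).filter fun x => ∃ v ∈ P, x ∈ cube v)
      = P.biUnion fun v => (fib s).filter fun x => x ∈ cube v := by
    ext x
    simp only [mem_filter, mem_biUnion]
    tauto
  rw [heq, card_biUnion]
  · have h1 : ∀ v : Fin n → ZMod 4, ((fib s).filter fun x => x ∈ cube v).card = 1 := by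
      intro v
      obtain ⟨x, ⟨hxc, hxf⟩, hu⟩ := cube_fib_unique v s
      rw [card_eq_one]
      exact ⟨x, by ext y; simp only [mem_filter, mem_singleton]
                   exact ⟨fun h => hu y ⟨h.2, h.1⟩, fun h => h ▸ ⟨hxf, hxc⟩⟩⟩
    simp [h1]
  · intro v hv w hw hvw
    rw [Function.onFun, Finset.disjoint_left]
    intro x hx hx'
    simp only [mem_filter] at hx hx'
    exact Set.disjoint_left.mp (hP hv hw hvw) hx.2 hx'.2

lemma uncov_card (hP : (P : Set (Fin n → ZMod 4)).Pairwise fun v w => Disjoint (cube v) (cube w))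
    (hcard : P.card + 1 = 2 ^ n) (s : Fin n → ZMod 2) : (uncov P s).card = 1 := by
  have hsub : ((fib s).filter fun x => ∃ v ∈ P, x ∈ cube v) ⊆ fib s := filter_subset _ _
  have hdiff : uncov P s = fib s \ (fib s).filter fun x => ∃ v ∈ P, x ∈ cube v := by
    ext x
    simp only [uncov, mem_filter, mem_sdiff, not_and, not_exists]
    tauto
  rw [hdiff, card_sdiff_of_subset hsub, covered_card hP, fib_card]
  omega

noncomputable def upt (P : Finset (Fin n → ZMod 4)) (s : Fin n → ZMod 2) : Fin n → ZMod 4 :=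
  if h : (uncov P s).Nonempty then h.choose else fun _ => 0

lemma uncov_eq (hP : (P : Set (Fin n → ZMod 4)).Pairwise fun v w => Disjoint (cube v) (cube w))
    (hcard : P.card + 1 = 2 ^ n) (s : Fin n → ZMod 2) : uncov P s = {upt P s} := by
  obtain ⟨a, ha⟩ := card_eq_one.mp (uncov_card hP hcard s)
  have hne : (uncov P s).Nonempty := ⟨a, ha ▸ mem_singleton_self a⟩
  have hm : upt P s ∈ uncov P s := by
    rw [upt, dif_pos hne]; exact hne.choose_spec
  rw [ha, mem_singleton] at hm
  rw [hm, ha]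

lemma par_add_three (a : ZMod 4) : par (a + 3) = par a + 1 := by revert a; decide

lemma eq_add_two_of {a b : ZMod 4} (h : par a = par b) (hne : a ≠ b) : a = b + 2 := by
  revert a b; decide

lemma not_pair_two {a c : ZMod 4} (h1 : a = c ∨ a = c + 1) (h2 : a + 2 = c ∨ a + 2 = c + 1) :
    False := by revert a c; decide

variable (hP : (P : Set (Fin n → ZMod 4)).Pairwise fun v w => Disjoint (cube v) (cube w))
  (hcard : P.card + 1 = 2 ^ n)

include hP hcard

lemma upt_mem_uncov (s : Fin n → ZMod 2) : upt P s ∈ uncov P s := by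
  rw [uncov_eq hP hcard]; exact mem_singleton_self _

lemma upt_mem_fib (s : Fin n → ZMod 2) : upt P s ∈ fib s :=
  (mem_filter.mp (upt_mem_uncov hP hcard s)).1

lemma upt_not_covered (s : Fin n → ZMod 2) : ∀ v ∈ P, upt P s ∉ cube v :=
  (mem_filter.mp (upt_mem_uncov hP hcard s)).2

lemma upt_unique {s : Fin n → ZMod 2} {x : Fin n → ZMod 4} (hx : x ∈ fib s)
    (h : ∀ v ∈ P, x ∉ cube v) : x = upt P s := by
  have : x ∈ uncov P s := mem_filter.mpr ⟨hx, h⟩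
  rwa [uncov_eq hP hcard, mem_singleton] at this

lemma upt_flip (i : Fin n) (s : Fin n → ZMod 2) {j : Fin n} (hj : j ≠ i) :
    upt P (Function.update s i (s i + 1)) j = upt P s j := by
  set u := upt P s with hu
  set s' := Function.update s i (s i + 1) with hs'
  set q := Function.update u i (u i + 1) with hq
  set q' := Function.update u i (u i + 3) with hq'
  have hufib : u ∈ fib s := upt_mem_fib hP hcard s
  have hqfib : q ∈ fib s' := by
    rw [mem_fib]; intro k
    rcases eq_or_ne k i with rfl | hk
    · rw [hq, hs', Function.update_self, Function.update_self, par_add_one, mem_fib.mp hufib k]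
    · rw [hq, hs', Function.update_of_ne hk, Function.update_of_ne hk, mem_fib.mp hufib k]
  have hq'fib : q' ∈ fib s' := by
    rw [mem_fib]; intro k
    rcases eq_or_ne k i with rfl | hk
    · rw [hq', hs', Function.update_self, Function.update_self, par_add_three, mem_fib.mp hufib k]
    · rw [hq', hs', Function.update_of_ne hk, Function.update_of_ne hk, mem_fib.mp hufib k]
  by_cases hqu : ∀ v ∈ P, q ∉ cube v
  · have hqe : q = upt P s' := upt_unique hP hcard hqfib hqu
    rw [← hqe, hq, Function.update_of_ne hj]
  · push_neg at hqu
    obtain ⟨v₁, hv₁, hqv₁⟩ := hqu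
    by_cases hq'u : ∀ v ∈ P, q' ∉ cube v
    · have hq'e : q' = upt P s' := upt_unique hP hcard hq'fib hq'u
      rw [← hq'e, hq', Function.update_of_ne hj]
    · push_neg at hq'u
      obtain ⟨v₂, hv₂, hq'v₂⟩ := hq'u
      exfalso
      obtain ⟨x₁, ⟨hx₁c, hx₁f⟩, _⟩ := cube_fib_unique v₁ s
      obtain ⟨x₂, ⟨hx₂c, hx₂f⟩, _⟩ := cube_fib_unique v₂ s
      have hx₁u : ∀ k, k ≠ i → x₁ k = u k := by
        intro k hk
        have h1 : q k = u k := by rw [hq, Function.update_of_ne hk]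
        rw [← h1]
        refine par_eq_par (hx₁c k) (hqv₁ k) ?_
        rw [mem_fib.mp hx₁f k, mem_fib.mp hqfib k, hs', Function.update_of_ne hk]
      have hx₂u : ∀ k, k ≠ i → x₂ k = u k := by
        intro k hk
        have h1 : q' k = u k := by rw [hq', Function.update_of_ne hk]
        rw [← h1]
        refine par_eq_par (hx₂c k) (hq'v₂ k) ?_
        rw [mem_fib.mp hx₂f k, mem_fib.mp hq'fib k, hs', Function.update_of_ne hk]
      have hx₁ne : x₁ ≠ u := fun h => upt_not_covered hP hcard s v₁ hv₁ (by rw [← hu, ← h]; exact hx₁c)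
      have hx₂ne : x₂ ≠ u := fun h => upt_not_covered hP hcard s v₂ hv₂ (by rw [← hu, ← h]; exact hx₂c)
      have hx₁i : x₁ i = u i + 2 := by
        refine eq_add_two_of (by rw [mem_fib.mp hx₁f i, mem_fib.mp hufib i]) fun h => hx₁ne ?_
        funext k
        rcases eq_or_ne k i with rfl | hk
        · exact h
        · exact hx₁u k hk
      have hx₂i : x₂ i = u i + 2 := by
        refine eq_add_two_of (by rw [mem_fib.mp hx₂f i, mem_fib.mp hufib i]) fun h => hx₂ne ?_
        funext k
        rcases eq_or_ne k i with rfl | hk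
        · exact h
        · exact hx₂u k hk
      have hx12 : x₁ = x₂ := by
        funext k
        rcases eq_or_ne k i with rfl | hk
        · rw [hx₁i, hx₂i]
        · rw [hx₁u k hk, hx₂u k hk]
      have hv12 : v₁ = v₂ := by
        by_contra hne
        exact Set.disjoint_left.mp (hP (mem_coe.mpr hv₁) (mem_coe.mpr hv₂) hne) hx₁c (hx12 ▸ hx₂c)
      have hqi : q i = u i + 1 := by rw [hq, Function.update_self]
      have hq'i : q' i = q i + 2 := by rw [hq', hq, Function.update_self, Function.update_self]; ring
      refine not_pair_two (hqv₁ i) ?_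
      rw [← hq'i]
      exact hv12 ▸ hq'v₂ i

lemma upt_agree (i : Fin n) (s t : Fin n → ZMod 2) (hst : s i = t i) :
    upt P s i = upt P t i := by
  have key : ∀ d : ℕ, ∀ s t : Fin n → ZMod 2, s i = t i →
      (univ.filter fun j => s j ≠ t j).card = d → upt P s i = upt P t i := by
    intro d
    induction d using Nat.strong_induction_on with
    | _ d ih =>
      intro s t hst hd
      rcases Nat.eq_zero_or_pos d with rfl | hpos
      · have : s = t := by
          funext k
          by_contra hk
          have : k ∈ univ.filter fun j => s j ≠ t j := mem_filter.mpr ⟨mem_univ k, hk⟩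
          rw [card_eq_zero.mp hd] at this
          exact notMem_empty k this
        rw [this]
      · have hne : (univ.filter fun j => s j ≠ t j).Nonempty := by
          rw [← card_pos, hd]; exact hpos
        obtain ⟨j, hjmem⟩ := hne
        have hjne : s j ≠ t j := (mem_filter.mp hjmem).2
        have hji : j ≠ i := fun h => hjne (h ▸ hst)
        set s₁ := Function.update s j (s j + 1) with hs₁
        have h1 : upt P s₁ i = upt P s i := upt_flip hP hcard j s hji.symm
        have hcd : (univ.filter fun k => s₁ k ≠ t k).card = d - 1 := by
          have heq : (univ.filter fun k => s₁ k ≠ t k)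
              = (univ.filter fun k => s k ≠ t k).erase j := by
            ext k
            simp only [mem_filter, mem_erase, mem_univ, true_and]
            rcases eq_or_ne k j with rfl | hk
            · simp [hs₁, Function.update_self, zmod2_ne hjne]
            · simp [hs₁, Function.update_of_ne hk, hk]
          rw [heq, card_erase_of_mem hjmem, hd]
        have h2 : upt P s₁ i = upt P t i := by
          refine ih (d - 1) (by omega) s₁ t ?_ hcd
          rw [hs₁, Function.update_of_ne hji.symm, hst]
        rw [← h1, h2]
  exact key _ s t hst rfl

omit hP hcard in
lemma zmod2_cases (b : ZMod 2) : b = 0 ∨ b = 1 := by revert b; decide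

omit hP hcard in
lemma odd_diff {a b : ZMod 4} (h : par a ≠ par b) : b = a + 1 ∨ a = b + 1 := by
  revert a b; decide

lemma main_exists : ∃ w : Fin n → ZMod 4, (∀ v ∈ P, Disjoint (cube v) (cube w)) ∧
    (⋃ v ∈ insert w P, cube v) = Set.univ := by
  set g : Fin n → ZMod 2 → ZMod 4 := fun i b => upt P (fun j => if j = i then b else 0) i with hgdef
  have hg : ∀ (s : Fin n → ZMod 2) (i : Fin n), upt P s i = g i (s i) := by
    intro s i
    exact upt_agree hP hcard i s _ (by simp)
  have hpar : ∀ (i : Fin n) (b : ZMod 2), par (g i b) = b := by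
    intro i b
    have := mem_fib.mp (upt_mem_fib hP hcard (fun j => if j = i then b else 0)) i
    simpa using this
  set w : Fin n → ZMod 4 := fun i => if g i 1 = g i 0 + 1 then g i 0 else g i 1 with hwdef
  have hw : ∀ (i : Fin n) (b : ZMod 2), g i b = w i ∨ g i b = w i + 1 := by
    intro i b
    have hne : par (g i 0) ≠ par (g i 1) := by
      rw [hpar, hpar]; decide
    rcases zmod2_cases b with rfl | rfl
    · by_cases h : g i 1 = g i 0 + 1
      · left; rw [hwdef]; simp [h]
      · right
        rcases odd_diff hne with h' | h'
        · exact absurd h' h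
        · rw [hwdef]; simp [h]; exact h'
    · by_cases h : g i 1 = g i 0 + 1
      · right; rw [hwdef]; simp [h]
      · left; rw [hwdef]; simp [h]
  have key1 : ∀ x : Fin n → ZMod 4, (∀ v ∈ P, x ∉ cube v) → x ∈ cube w := by
    intro x hx
    have hxf : x ∈ fib (fun i => par (x i)) := mem_fib.mpr fun i => rfl
    have hxe : x = upt P (fun i => par (x i)) := upt_unique hP hcard hxf hx
    intro i
    rw [hxe, hg]
    exact hw i _
  have key2 : ∀ x : Fin n → ZMod 4, x ∈ cube w → ∀ v ∈ P, x ∉ cube v := by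
    intro x hxw v hv hxv
    set s : Fin n → ZMod 2 := fun i => par (x i) with hsdef
    have hux : upt P s = x := by
      funext i
      have h1 : upt P s i = g i (s i) := hg s i
      refine par_eq_par (c := w i) ?_ (hxw i) ?_
      · rw [h1]; exact hw i _
      · rw [h1, hpar]
    exact upt_not_covered hP hcard s v hv (hux ▸ hxv)
  refine ⟨w, ?_, ?_⟩
  · intro v hv
    rw [Set.disjoint_left]
    intro x hxv hxw
    exact key2 x hxw v hv hxv
  · ext x
    simp only [Set.mem_iUnion, Set.mem_univ, iff_true, Finset.mem_insert]
    by_cases hcov : ∃ v ∈ P, x ∈ cube v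
    · obtain ⟨v, hv, hxv⟩ := hcov
      exact ⟨v, ⟨Or.inr hv, hxv⟩⟩
    · push_neg at hcov
      exact ⟨w, ⟨Or.inl rfl, key1 x hcov⟩⟩

end CubeAuxProof

theorem packing_card_pred_extends_to_tiling {n : ℕ} (P : Finset (Fin n → ZMod 4))
    (hP : (P : Set (Fin n → ZMod 4)).Pairwise fun v w => Disjoint (cube v) (cube w))
    (hcard : P.card + 1 = 2 ^ n) :
    ∃ w : Fin n → ZMod 4, (∀ v ∈ P, Disjoint (cube v) (cube w)) ∧
      (⋃ v ∈ insert w P, cube v) = Set.univ :=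
  CubeAuxProof.main_exists hP hcard
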